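/- An m × n matrix A over T (m ≤ n) whose rows are tropically independent has an m × m submatrix (choice of m columns) that is tropically nonsingular. -/

import Mathlib

/-- The extended tropical semiring `T = ℝ ∪ ℝ^ν ∪ {-∞}`:
`bot` is `-∞`, `real a` is the real element `a`, `ghost a` is `a^ν`. -/
inductive T : Type where
  | bot : T
  | real : ℝ → T
  | ghost : ℝ → T

namespace T

noncomputable section

/-- Tropical addition `⊕` (max with respect to `-∞ ≺ a ≺ a^ν`, ties become ghosts). -/
def add : T → T → T
  | bot, y => y
  | real a, bot => real a
  | ghost a, bot => ghost a
  | real a, real b => if a < b then real b else if b < a then real a else ghost a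
  | real a, ghost b => if b < a then real a else ghost b
  | ghost a, real b => if a < b then real b else ghost a
  | ghost a, ghost b => ghost (max a b)

/-- Tropical multiplication `⊙` (addition of underlying reals, ghosts absorb). -/
def mul : T → T → T
  | bot, _ => bot
  | real _, bot => bot
  | ghost _, bot => bot
  | real a, real b => real (a + b)
  | real a, ghost b => ghost (a + b)
  | ghost a, real b => ghost (a + b)
  | ghost a, ghost b => ghost (a + b)

/-- The total order `⪯` on `T`: `-∞` least, order of reals, `a ≺ a^ν`. -/
def le : T → T → Prop
  | bot, _ => True
  | real _, bot => False
  | real a, real b => a ≤ b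
  | real a, ghost b => a ≤ b
  | ghost _, bot => False
  | ghost a, real b => a < b
  | ghost a, ghost b => a ≤ b

/-- Membership in the ghost ideal `U̅ = U ∪ {-∞}`. -/
def IsGhost : T → Prop
  | bot => True
  | real _ => False
  | ghost _ => True

/-- Membership in `ℝ ∪ {-∞}` (non-ghost elements). -/
def RealOrBot : T → Prop
  | bot => True
  | real _ => True
  | ghost _ => False

/-- The ghost map `ν`. -/
def nu : T → T
  | bot => bot
  | real a => ghost a
  | ghost a => ghost a

/-- Tropical sum of a list. -/
def sumList : List T → T := fun l => l.foldr add bot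

/-- Tropical sum over a finite index set. -/
def sum {α : Type*} (s : Finset α) (f : α → T) : T := sumList (s.toList.map f)

/-- Tropical product of a list. -/
def prodList : List T → T := fun l => l.foldr mul (real 0)

/-- The weight of a permutation `σ` in a matrix: `a_{1,σ(1)} ⊙ ⋯ ⊙ a_{n,σ(n)}`. -/
def permProd {n : ℕ} (A : Matrix (Fin n) (Fin n) T) (σ : Equiv.Perm (Fin n)) : T :=
  prodList ((List.finRange n).map fun i => A i (σ i))

/-- The tropical determinant (permanent) `|A| = ⨁_σ a_{1,σ(1)} ⊙ ⋯ ⊙ a_{n,σ(n)}`. -/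
def det {n : ℕ} (A : Matrix (Fin n) (Fin n) T) : T :=
  sum (Finset.univ : Finset (Equiv.Perm (Fin n))) (fun σ => permProd A σ)

/-- Tropical dependence of a family of `m` vectors in `T^(n)`:
some tropical linear combination with coefficients in `ℝ ∪ {-∞}`, not all `-∞`,
lands in the ghost part `U̅^(n)`. -/
def Dependent {m n : ℕ} (v : Fin m → Fin n → T) : Prop :=
  ∃ α : Fin m → T, (∀ i, RealOrBot (α i)) ∧ (∃ i, α i ≠ bot) ∧
    ∀ j, IsGhost (sum Finset.univ fun i => mul (α i) (v i j))

/-- The tropical rank: maximal number of tropically independent rows. -/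
def rk {m n : ℕ} (A : Matrix (Fin m) (Fin n) T) : ℕ :=
  sSup {k | ∃ f : Fin k → Fin m, Function.Injective f ∧ ¬ Dependent (fun i => A (f i))}

end

end T

namespace T

noncomputable section

/-- numeric value -/
def nuv : T → WithBot ℝ
  | bot => ⊥
  | real a => (a : WithBot ℝ)
  | ghost a => (a : WithBot ℝ)

/-- is a (tangible) real element -/
def isR : T → Prop
  | bot => False
  | real _ => True
  | ghost _ => False

/-- tangible lift of a numeric value -/
def tlift : WithBot ℝ → T := fun x => x.recBotCoe bot real

@[simp] lemma tlift_bot : tlift ⊥ = bot := rfl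
@[simp] lemma tlift_coe (a : ℝ) : tlift (a : WithBot ℝ) = real a := rfl
@[simp] lemma nuv_tlift (x : WithBot ℝ) : nuv (tlift x) = x := by
  induction x using WithBot.recBotCoe <;> rfl
@[simp] lemma isR_tlift (x : WithBot ℝ) : isR (tlift x) ↔ x ≠ ⊥ := by
  induction x using WithBot.recBotCoe <;> simp [tlift, isR]
lemma realOrBot_tlift (x : WithBot ℝ) : RealOrBot (tlift x) := by
  induction x using WithBot.recBotCoe <;> simp [tlift, RealOrBot]
@[simp] lemma tlift_ne_bot (x : WithBot ℝ) : tlift x ≠ bot ↔ x ≠ ⊥ := by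
  induction x using WithBot.recBotCoe <;> simp [tlift]

lemma isGhost_iff_not_isR (x : T) : IsGhost x ↔ ¬ isR x := by
  cases x <;> simp [IsGhost, isR]

lemma nuv_add (x y : T) : nuv (add x y) = max (nuv x) (nuv y) := by
  cases x <;> cases y <;> simp only [add, nuv]
  · simp
  · simp
  · simp
  · simp
  · rename_i a b
    split_ifs with h1 h2
    · rw [max_eq_right (WithBot.coe_le_coe.2 h1.le)]
    · rw [max_eq_left (WithBot.coe_le_coe.2 h2.le)]
    · have : a = b := le_antisymm (not_lt.1 h2) (not_lt.1 h1)
      subst this; simp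
  · rename_i a b
    split_ifs with h1
    · rw [max_eq_left (WithBot.coe_le_coe.2 h1.le)]
    · rw [max_eq_right (WithBot.coe_le_coe.2 (not_lt.1 h1))]
  · simp
  · rename_i a b
    split_ifs with h1
    · rw [max_eq_right (WithBot.coe_le_coe.2 h1.le)]
    · rw [max_eq_left (WithBot.coe_le_coe.2 (not_lt.1 h1))]
  · rename_i a b
    rw [← WithBot.coe_max]

lemma isR_add (x y : T) :
    isR (add x y) ↔ (isR x ∧ nuv y < nuv x) ∨ (isR y ∧ nuv x < nuv y) := by
  cases x <;> cases y <;> simp only [add, nuv, isR]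
  · simp
  · simp [WithBot.bot_lt_coe]
  · simp
  · simp [WithBot.bot_lt_coe]
  · rename_i a b
    split_ifs with h1 h2 <;>
      simp only [isR, WithBot.coe_lt_coe, true_and, false_or, or_false, iff_true, true_iff,
        false_iff, not_or, not_lt, true_and] <;>
      first
        | exact Or.inr h1
        | exact Or.inl h2
        | exact ⟨not_lt.1 h2, not_lt.1 h1⟩
  · rename_i a b
    split_ifs with h1 <;>
      simp only [isR, WithBot.coe_lt_coe, true_and, false_and, or_false, false_or, iff_true,
        false_iff, not_lt, iff_true]
    · simp [h1]
    · exact not_lt.1 h1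
  · simp
  · rename_i a b
    split_ifs with h1 <;>
      simp only [isR, WithBot.coe_lt_coe, true_and, false_and, or_false, false_or, iff_true,
        false_iff, not_lt, iff_true]
    · simp [h1]
    · exact not_lt.1 h1
  · simp [isR]

lemma nuv_mul (x y : T) : nuv (mul x y) = nuv x + nuv y := by
  cases x <;> cases y <;> simp [mul, nuv, ← WithBot.coe_add]

lemma isR_mul (x y : T) : isR (mul x y) ↔ isR x ∧ isR y := by
  cases x <;> cases y <;> simp [mul, isR]

end

end T

namespace Dev
noncomputable section
open T

lemma bot_lt_nuv {x : T} (h : isR x) : ⊥ < nuv x := by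
  cases x with
  | bot => simp [isR] at h
  | real a => exact WithBot.bot_lt_coe a
  | ghost a => simp [isR] at h

@[simp] lemma sumList_nil : sumList ([] : List T) = T.bot := rfl
@[simp] lemma sumList_cons (a : T) (l : List T) : sumList (a :: l) = add a (sumList l) := rfl

lemma nuv_sumList_le {ι : Type*} (l : List ι) (f : ι → T) (i : ι) (hi : i ∈ l) :
    nuv (f i) ≤ nuv (sumList (l.map f)) := by
  induction l with
  | nil => simp at hi
  | cons a l ih =>
    simp only [List.map_cons, sumList_cons, nuv_add]
    rcases List.mem_cons.1 hi with h | h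
    · subst h; exact le_max_left _ _
    · exact le_trans (ih h) (le_max_right _ _)

lemma nuv_sumList_lt {ι : Type*} (l : List ι) (f : ι → T) (M : WithBot ℝ) (hM : ⊥ < M)
    (h : ∀ x ∈ l, nuv (f x) < M) : nuv (sumList (l.map f)) < M := by
  induction l with
  | nil => simpa [sumList, nuv] using hM
  | cons a l ih =>
    simp only [List.map_cons, sumList_cons, nuv_add, max_lt_iff]
    exact ⟨h a (by simp), ih fun x hx => h x (by simp [hx])⟩

lemma sum_real_elim {ι : Type*} (l : List ι) (f : ι → T)
    (h : isR (sumList (l.map f))) :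
    ∃ i ∈ l, isR (f i) ∧ nuv (sumList (l.map f)) = nuv (f i) ∧
      ∀ i' ∈ l, i' ≠ i → nuv (f i') < nuv (f i) := by
  induction l with
  | nil => simp [sumList, isR] at h
  | cons a l ih =>
    rw [List.map_cons, sumList_cons] at h ⊢
    rcases (isR_add _ _).1 h with ⟨hra, hlt⟩ | ⟨hrs, hlt⟩
    · refine ⟨a, by simp, hra, ?_, ?_⟩
      · rw [nuv_add, max_eq_left hlt.le]
      · intro i' hi' hne
        rcases List.mem_cons.1 hi' with h | h
        · exact absurd h hne
        · exact lt_of_le_of_lt (nuv_sumList_le l f i' h) hlt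
    · obtain ⟨i, hi, hri, hvi, hdom⟩ := ih hrs
      refine ⟨i, List.mem_cons_of_mem _ hi, hri, ?_, ?_⟩
      · rw [nuv_add, max_eq_right hlt.le, hvi]
      · intro i' hi' hne
        rcases List.mem_cons.1 hi' with h | h
        · subst h; exact hvi ▸ hlt
        · exact hdom i' h hne

lemma sum_real_intro {ι : Type*} (l : List ι) (hl : l.Nodup) (f : ι → T) (i : ι)
    (hi : i ∈ l) (hri : isR (f i))
    (hdom : ∀ i' ∈ l, i' ≠ i → nuv (f i') < nuv (f i)) : isR (sumList (l.map f)) := by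
  induction l with
  | nil => simp at hi
  | cons a l ih =>
    rw [List.map_cons, sumList_cons]
    rcases List.mem_cons.1 hi with h | h
    · subst h
      refine (isR_add _ _).2 (Or.inl ⟨hri, ?_⟩)
      refine nuv_sumList_lt l f _ ?_ ?_
      · exact bot_lt_nuv hri
      · intro x hx
        exact hdom x (by simp [hx]) (by rintro rfl; exact (List.nodup_cons.1 hl).1 hx)
    · have hne : a ≠ i := by rintro rfl; exact (List.nodup_cons.1 hl).1 h
      have hrs := ih (List.nodup_cons.1 hl).2 h
        (fun i' hi' hne' => hdom i' (by simp [hi']) hne')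
      refine (isR_add _ _).2 (Or.inr ⟨hrs, ?_⟩)
      exact lt_of_lt_of_le (hdom a (by simp) hne) (nuv_sumList_le l f i h)

@[simp] lemma prodList_nil : prodList ([] : List T) = T.real 0 := rfl
@[simp] lemma prodList_cons (a : T) (l : List T) : prodList (a :: l) = mul a (prodList l) := rfl

lemma nuv_prodList (l : List T) : nuv (prodList l) = (l.map nuv).sum := by
  induction l with
  | nil => simp [prodList, nuv]
  | cons a l ih => simp [nuv_mul, ih]

lemma isR_prodList (l : List T) : isR (prodList l) ↔ ∀ x ∈ l, isR x := by
  induction l with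
  | nil => simp [prodList, isR]
  | cons a l ih => simp [isR_mul, ih]

end
end Dev

namespace Dev
noncomputable section
open T

def pw {m : ℕ} (B : Matrix (Fin m) (Fin m) T) (σ : Equiv.Perm (Fin m)) : WithBot ℝ :=
  ∑ i, nuv (B i (σ i))

lemma nuv_permProd {m : ℕ} (B : Matrix (Fin m) (Fin m) T) (σ : Equiv.Perm (Fin m)) :
    nuv (permProd B σ) = pw B σ := by
  rw [permProd, nuv_prodList, pw, Fin.sum_univ_def, List.map_map]
  rfl

lemma isR_permProd {m : ℕ} (B : Matrix (Fin m) (Fin m) T) (σ : Equiv.Perm (Fin m)) :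
    isR (permProd B σ) ↔ ∀ i, isR (B i (σ i)) := by
  rw [permProd, isR_prodList]
  constructor
  · intro h i; exact h _ (List.mem_map.2 ⟨i, List.mem_finRange i, rfl⟩)
  · rintro h x hx
    obtain ⟨i, -, rfl⟩ := List.mem_map.1 hx
    exact h i

lemma det_real_elim {m : ℕ} (B : Matrix (Fin m) (Fin m) T) (h : isR (det B)) :
    ∃ σ, (∀ i, isR (B i (σ i))) ∧ ∀ τ, τ ≠ σ → pw B τ < pw B σ := by
  obtain ⟨σ, -, hr, -, hdom⟩ := sum_real_elim (Finset.univ.toList) (fun σ => permProd B σ) h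
  refine ⟨σ, (isR_permProd B σ).1 hr, fun τ hne => ?_⟩
  have := hdom τ (by simp [Finset.mem_toList]) hne
  rwa [nuv_permProd, nuv_permProd] at this

lemma det_real_intro {m : ℕ} (B : Matrix (Fin m) (Fin m) T) (σ : Equiv.Perm (Fin m))
    (hr : ∀ i, isR (B i (σ i))) (hdom : ∀ τ, τ ≠ σ → pw B τ < pw B σ) : isR (det B) := by
  refine sum_real_intro (Finset.univ.toList) (Finset.nodup_toList _) (fun σ => permProd B σ)
    σ (by simp [Finset.mem_toList]) ((isR_permProd B σ).2 hr) ?_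
  intro τ _ hne
  rw [nuv_permProd, nuv_permProd]
  exact hdom τ hne

def Viol {m n : ℕ} (A : Matrix (Fin m) (Fin n) T) (β : Fin m → WithBot ℝ) (j : Fin n) : Prop :=
  ∃ i, β i ≠ ⊥ ∧ isR (A i j) ∧ ∀ i', i' ≠ i → β i' + nuv (A i' j) < β i + nuv (A i j)

def Sol {m n : ℕ} (A : Matrix (Fin m) (Fin n) T) (β : Fin m → WithBot ℝ) : Prop :=
  (∃ i, β i ≠ ⊥) ∧ ∀ j, ¬ Viol A β j

lemma sol_dependent {m n : ℕ} (A : Matrix (Fin m) (Fin n) T) (β : Fin m → WithBot ℝ)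
    (h : Sol A β) : Dependent (fun i j => A i j) := by
  refine ⟨fun i => tlift (β i), fun i => realOrBot_tlift _, ?_, ?_⟩
  · obtain ⟨i, hi⟩ := h.1
    exact ⟨i, by simpa using hi⟩
  intro j
  rw [isGhost_iff_not_isR]
  intro hreal
  obtain ⟨i, -, hri, -, hdom⟩ :=
    sum_real_elim (Finset.univ.toList) (fun i => mul (tlift (β i)) (A i j)) hreal
  apply h.2 j
  obtain ⟨hbi, hra⟩ := (isR_mul _ _).1 hri
  refine ⟨i, by simpa using hbi, hra, ?_⟩
  intro i' hne
  have := hdom i' (by simp [Finset.mem_toList]) hne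
  simpa [nuv_mul, nuv_tlift] using this

end
end Dev

namespace Dev
noncomputable section
open T

/-! ### WithBot helpers -/

lemma wsum_ne_bot {ι : Type*} (s : Finset ι) (f : ι → WithBot ℝ)
    (h : ∀ i ∈ s, f i ≠ ⊥) : (∑ i ∈ s, f i) ≠ ⊥ := by
  induction s using Finset.cons_induction with
  | empty => simp
  | cons a s ha ih =>
    rw [Finset.sum_cons]
    obtain ⟨x, hx⟩ := WithBot.ne_bot_iff_exists.1 (h a (Finset.mem_cons_self a s))
    obtain ⟨z, hz⟩ := WithBot.ne_bot_iff_exists.1 (ih fun i hi => h i (Finset.mem_cons_of_mem hi))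
    rw [← hx, ← hz, ← WithBot.coe_add]
    exact WithBot.coe_ne_bot

lemma wsum_term_ne_bot {ι : Type*} [DecidableEq ι] (s : Finset ι) (f : ι → WithBot ℝ)
    (h : (∑ i ∈ s, f i) ≠ ⊥) : ∀ i ∈ s, f i ≠ ⊥ := by
  intro i hi hbot
  apply h
  rw [← Finset.add_sum_erase s f hi, hbot, WithBot.bot_add]

/-! ### ghostify -/

variable {m n : ℕ}

def gfy (A : Matrix (Fin m) (Fin n) T) (r : Fin m) (c : Fin n) : Matrix (Fin m) (Fin n) T :=
  fun i j => if i = r ∧ j = c then nu (A i j) else A i j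

@[simp] lemma nuv_nu (x : T) : nuv (nu x) = nuv x := by cases x <;> rfl
@[simp] lemma isR_nu (x : T) : ¬ isR (nu x) := by cases x <;> simp [nu, isR]

lemma nuv_gfy (A : Matrix (Fin m) (Fin n) T) (r : Fin m) (c : Fin n) (i : Fin m) (j : Fin n) :
    nuv (gfy A r c i j) = nuv (A i j) := by
  unfold gfy; split_ifs <;> simp

lemma isR_gfy {A : Matrix (Fin m) (Fin n) T} {r : Fin m} {c : Fin n} {i : Fin m} {j : Fin n}
    (h : isR (gfy A r c i j)) : isR (A i j) := by
  by_cases hc : i = r ∧ j = c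
  · rw [gfy, if_pos hc] at h; exact absurd h (isR_nu _)
  · rwa [gfy, if_neg hc] at h

lemma gfy_eq_of_ne {A : Matrix (Fin m) (Fin n) T} {r : Fin m} {c : Fin n} {i : Fin m} {j : Fin n}
    (h : ¬(i = r ∧ j = c)) : gfy A r c i j = A i j := by rw [gfy, if_neg h]

def GH (A : Matrix (Fin m) (Fin n) T) : Prop :=
  ∀ f : Fin m → Fin n, Function.Injective f → ¬ isR (det (A.submatrix id f))

lemma pw_gfy (A : Matrix (Fin m) (Fin n) T) (r : Fin m) (c : Fin n)
    (hmn : m ≤ n) (f : Fin m → Fin n) (τ : Equiv.Perm (Fin m)) :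
    pw ((gfy A r c).submatrix id f) τ = pw (A.submatrix id f) τ := by
  unfold pw
  exact Finset.sum_congr rfl fun i _ => by simp [Matrix.submatrix, nuv_gfy]

lemma GH_gfy {A : Matrix (Fin m) (Fin n) T} {r : Fin m} {c : Fin n} (hmn : m ≤ n) (hG : GH A) :
    GH (gfy A r c) := by
  intro f hf hreal
  obtain ⟨σ, hr, hdom⟩ := det_real_elim _ hreal
  apply hG f hf
  apply det_real_intro _ σ
  · intro i
    have := hr i
    simp only [Matrix.submatrix_apply, id_eq] at this ⊢
    exact isR_gfy this
  · intro τ hτ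
    have := hdom τ hτ
    rwa [pw_gfy A r c hmn, pw_gfy A r c hmn] at this

/-! ### violations -/

def VAt (A : Matrix (Fin m) (Fin n) T) (β : Fin m → WithBot ℝ) (j : Fin n) (i : Fin m) : Prop :=
  β i ≠ ⊥ ∧ isR (A i j) ∧ ∀ i', i' ≠ i → β i' + nuv (A i' j) < β i + nuv (A i j)

lemma viol_iff (A : Matrix (Fin m) (Fin n) T) (β : Fin m → WithBot ℝ) (j : Fin n) :
    Viol A β j ↔ ∃ i, VAt A β j i := Iff.rfl

lemma vat_unique {A : Matrix (Fin m) (Fin n) T} {β : Fin m → WithBot ℝ} {j : Fin n}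
    {i1 i2 : Fin m} (h1 : VAt A β j i1) (h2 : VAt A β j i2) : i1 = i2 := by
  by_contra hne
  exact absurd (h1.2.2 i2 fun h => hne h.symm) (not_lt.2 (h2.2.2 i1 hne).le)

lemma vat_gfy {A : Matrix (Fin m) (Fin n) T} {β : Fin m → WithBot ℝ} {j : Fin n} {i : Fin m}
    {r : Fin m} {c : Fin n} (h : VAt A β j i) (hne : ¬(i = r ∧ j = c)) :
    VAt (gfy A r c) β j i := by
  refine ⟨h.1, ?_, ?_⟩
  · rw [gfy_eq_of_ne hne]; exact h.2.1
  · intro i' hi'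
    rw [nuv_gfy, nuv_gfy]
    exact h.2.2 i' hi'

lemma sol_gfy_cases {A : Matrix (Fin m) (Fin n) T} {r : Fin m} {c : Fin n}
    {β : Fin m → WithBot ℝ} (hsol : Sol (gfy A r c) β) :
    Sol A β ∨ VAt A β c r := by
  by_cases hS : Sol A β
  · exact Or.inl hS
  right
  have hnb := hsol.1
  have hex : ∃ j, Viol A β j := by
    by_contra h; push_neg at h; exact hS ⟨hnb, h⟩
  obtain ⟨j, i₀, hvat⟩ := hex
  by_cases hc : i₀ = r ∧ j = c
  · rw [← hc.1, ← hc.2]; exact hvat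
  · exact absurd ⟨i₀, vat_gfy hvat hc⟩ (hsol.2 j)

/-! ### mixing -/

lemma vat_mix {A : Matrix (Fin m) (Fin n) T} {β1 β2 : Fin m → WithBot ℝ} {lam : ℝ}
    {j : Fin n} {i₀ : Fin m}
    (hv : VAt A (fun i => max ((lam : WithBot ℝ) + β1 i) (β2 i)) j i₀) :
    (VAt A β1 j i₀ ∧ max ((lam : WithBot ℝ) + β1 i₀) (β2 i₀) = (lam : WithBot ℝ) + β1 i₀) ∨
    (VAt A β2 j i₀ ∧ max ((lam : WithBot ℝ) + β1 i₀) (β2 i₀) = β2 i₀) := by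
  obtain ⟨hnb, hre, hdom⟩ := hv
  rcases max_choice ((lam : WithBot ℝ) + β1 i₀) (β2 i₀) with hmax | hmax
  · left
    refine ⟨⟨?_, hre, ?_⟩, hmax⟩
    · intro hb
      simp only at hnb
      rw [hmax, hb, WithBot.add_bot] at hnb; exact hnb rfl
    · intro i' hi'
      have h1 : (lam : WithBot ℝ) + β1 i' + nuv (A i' j) ≤
          max ((lam : WithBot ℝ) + β1 i') (β2 i') + nuv (A i' j) :=
        add_le_add_left (le_max_left _ _) _
      have h2 := hdom i' hi'
      simp only at h2
      rw [hmax] at h2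
      have h3 : (lam : WithBot ℝ) + β1 i' + nuv (A i' j) <
          (lam : WithBot ℝ) + β1 i₀ + nuv (A i₀ j) := lt_of_le_of_lt h1 h2
      have h4 : (lam : WithBot ℝ) + (β1 i' + nuv (A i' j)) <
          (lam : WithBot ℝ) + (β1 i₀ + nuv (A i₀ j)) := by
        rwa [← add_assoc, ← add_assoc]
      exact (WithBot.add_lt_add_iff_left (by simp : (lam : WithBot ℝ) ≠ ⊥)).1 h4
  · right
    refine ⟨⟨?_, hre, ?_⟩, hmax⟩
    · intro hb
      simp only at hnb
      rw [hmax, hb] at hnb; exact hnb rfl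
    · intro i' hi'
      have h1 : β2 i' + nuv (A i' j) ≤
          max ((lam : WithBot ℝ) + β1 i') (β2 i') + nuv (A i' j) :=
        add_le_add_left (le_max_right _ _) _
      have h2 := hdom i' hi'
      simp only at h2
      rw [hmax] at h2
      exact lt_of_le_of_lt h1 h2

end
end Dev

namespace Dev
noncomputable section
open T Equiv Equiv.Perm

lemma exists_cycle_ge {m : ℕ} (B : Matrix (Fin m) (Fin m) T) :
    ∀ (N : ℕ) (σ : Equiv.Perm (Fin m)), σ.support.card ≤ N → σ ≠ 1 →
    pw B 1 ≠ ⊥ → pw B 1 ≤ pw B σ →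
    ∃ τ : Equiv.Perm (Fin m), τ.IsCycle ∧ pw B 1 ≤ pw B τ := by
  intro N
  induction N with
  | zero =>
    intro σ hcard hne _ _
    exact absurd (Equiv.Perm.card_support_eq_zero.1 (Nat.le_zero.1 hcard)) hne
  | succ N IH =>
    intro σ hcard hne hfin hge
    by_cases hcyc : σ.IsCycle
    · exact ⟨σ, hcyc, hge⟩
    have hx : ∃ x, σ x ≠ x := by
      by_contra h; push_neg at h
      exact hne (Equiv.ext fun x => h x)
    obtain ⟨x, hx⟩ := hx
    set τ0 := σ.cycleOf x with hτ0
    have hcyc0 : τ0.IsCycle := Equiv.Perm.isCycle_cycleOf σ hx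
    set ρ := σ * τ0⁻¹ with hρ
    have hpt : ∀ y, (τ0 y = σ y ∧ ρ y = y) ∨ (τ0 y = y ∧ ρ y = σ y) := by
      intro y
      by_cases hyc : σ.SameCycle x y
      · left
        have h1 : τ0 y = σ y := by rw [hτ0, Equiv.Perm.cycleOf_apply, if_pos hyc]
        refine ⟨h1, ?_⟩
        have h2 : τ0 (σ⁻¹ y) = y := by
          rw [hτ0, Equiv.Perm.cycleOf_apply,
            if_pos (show σ.SameCycle x (σ⁻¹ y) from Equiv.Perm.sameCycle_symm_apply_right.2 hyc),
            ← Equiv.Perm.mul_apply, mul_inv_cancel, Equiv.Perm.one_apply]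
        have h3 : τ0⁻¹ y = σ⁻¹ y := (Equiv.Perm.inv_eq_iff_eq).2 h2.symm
        rw [hρ, Equiv.Perm.mul_apply, h3, ← Equiv.Perm.mul_apply, mul_inv_cancel, Equiv.Perm.one_apply]
      · right
        have h1 : τ0 y = y := by rw [hτ0, Equiv.Perm.cycleOf_apply, if_neg hyc]
        refine ⟨h1, ?_⟩
        have h3 : τ0⁻¹ y = y := (Equiv.Perm.inv_eq_iff_eq).2 h1.symm
        rw [hρ, Equiv.Perm.mul_apply, h3]
    have hsum : pw B τ0 + pw B ρ = pw B σ + pw B 1 := by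
      unfold pw
      rw [← Finset.sum_add_distrib, ← Finset.sum_add_distrib]
      refine Finset.sum_congr rfl fun y _ => ?_
      rcases hpt y with ⟨h1, h2⟩ | ⟨h1, h2⟩
      · rw [h1, h2, Equiv.Perm.one_apply]
      · rw [h1, h2, Equiv.Perm.one_apply, add_comm]
    have hσfin : pw B σ ≠ ⊥ := by
      intro h; rw [h, le_bot_iff] at hge; exact hfin hge
    obtain ⟨p1, hp1⟩ := WithBot.ne_bot_iff_exists.1 hfin
    obtain ⟨ps, hps⟩ := WithBot.ne_bot_iff_exists.1 hσfin
    have hrhs : pw B σ + pw B 1 = ((ps + p1 : ℝ) : WithBot ℝ) := by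
      rw [← hps, ← hp1, WithBot.coe_add]
    have ht0fin : pw B τ0 ≠ ⊥ := by
      intro h; rw [h, WithBot.bot_add, hrhs] at hsum; exact WithBot.coe_ne_bot hsum.symm
    have hρfin : pw B ρ ≠ ⊥ := by
      intro h; rw [h, WithBot.add_bot, hrhs] at hsum; exact WithBot.coe_ne_bot hsum.symm
    obtain ⟨pt, hpt'⟩ := WithBot.ne_bot_iff_exists.1 ht0fin
    obtain ⟨pr, hpr⟩ := WithBot.ne_bot_iff_exists.1 hρfin
    have hsum' : pt + pr = ps + p1 := by
      have : ((pt + pr : ℝ) : WithBot ℝ) = ((ps + p1 : ℝ) : WithBot ℝ) := by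
        rw [WithBot.coe_add, WithBot.coe_add, hpt', hpr, hps, hp1, hsum]
      exact_mod_cast this
    have hge' : p1 ≤ ps := by
      have : ((p1 : ℝ) : WithBot ℝ) ≤ ((ps : ℝ) : WithBot ℝ) := by rw [hp1, hps]; exact hge
      exact_mod_cast this
    by_cases hineq : p1 ≤ pt
    · refine ⟨τ0, hcyc0, ?_⟩
      rw [← hp1, ← hpt']
      exact_mod_cast hineq
    push_neg at hineq
    have hρgt : p1 < pr := by linarith
    have hρne : ρ ≠ 1 := by
      intro h
      rw [h] at hpr
      rw [← hpr] at hp1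
      have : p1 = pr := by exact_mod_cast hp1
      rw [this] at hρgt; exact lt_irrefl _ hρgt
    have hsup : ρ.support ⊂ σ.support := by
      constructor
      · intro y hy
        rw [Equiv.Perm.mem_support] at hy ⊢
        rcases hpt y with ⟨-, h2⟩ | ⟨-, h2⟩
        · exact absurd h2 hy
        · rwa [h2] at hy
      · intro hsub
        have hxs : x ∈ σ.support := Equiv.Perm.mem_support.2 hx
        have hxr : x ∉ ρ.support := by
          rw [Equiv.Perm.mem_support, not_not]
          rcases hpt x with ⟨-, h2⟩ | ⟨h1, -⟩
          · exact h2
          · exact absurd (by rw [hτ0, Equiv.Perm.cycleOf_apply_self] at h1; exact h1) hx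
      -- x is moved by σ but must be in ρ.support via hsub? No: hsub : σ.support ⊆ ρ.support
        exact hxr (hsub hxs)
    have hcard' : ρ.support.card ≤ N := by
      have := Finset.card_lt_card hsup
      omega
    refine IH ρ hcard' hρne hfin ?_
    rw [← hp1, ← hpr]
    exact_mod_cast hρgt.le

end
end Dev

namespace Dev
noncomputable section
open T Equiv Equiv.Perm Finset

lemma nuv_ne_bot_of_isR {x : T} (h : isR x) : nuv x ≠ ⊥ :=
  fun hb => by simpa [hb] using bot_lt_nuv h

lemma perm_case {m n : ℕ} (A : Matrix (Fin m) (Fin n) T) (c : Fin m → Fin n)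
    (hcR : ∀ i, isR (A i (c i)))
    (hcol : ∀ i j, isR (A i j) → j = c i)
    (hcinj : Function.Injective c)
    (hG : GH A) :
    ∃ β, Sol A β := by
  classical
  set B := A.submatrix id c with hB
  have hBd : ∀ (i : Fin m) (σ : Equiv.Perm (Fin m)), B i (σ i) = A i (c (σ i)) := fun i σ => rfl
  have hd1 : ∀ i, isR (B i ((1 : Equiv.Perm (Fin m)) i)) := by
    intro i; simpa [hB] using hcR i
  have hfin1 : pw B 1 ≠ ⊥ := by
    apply wsum_ne_bot
    intro i _
    exact nuv_ne_bot_of_isR (hd1 i)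
  have hGc : ¬ isR (det B) := hG c hcinj
  have hex : ∃ σ : Equiv.Perm (Fin m), σ ≠ 1 ∧ pw B 1 ≤ pw B σ := by
    by_contra h
    push_neg at h
    exact hGc (det_real_intro B 1 hd1 fun τ hτ => lt_of_not_ge fun hle => absurd hle (not_le.2 (h τ hτ)))
  obtain ⟨σ0, hσ0, hge0⟩ := hex
  obtain ⟨τ, hcyc, hge⟩ := exists_cycle_ge B σ0.support.card σ0 le_rfl hσ0 hfin1 hge0
  have hτne : τ ≠ 1 := hcyc.ne_one
  obtain ⟨x₀, hx₀, hall⟩ := hcyc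
  set k := orderOf τ with hk
  have hk0 : 0 < k := orderOf_pos τ
  have hk1 : k ≠ 1 := fun h => hτne (orderOf_eq_one_iff.1 h)
  have hk2 : 2 ≤ k := by omega
  set y : ℕ → Fin m := fun t => (τ ^ t) x₀ with hy
  have P1 : ∀ t, y (t + 1) = τ (y t) := by
    intro t
    show (τ ^ (t + 1)) x₀ = τ ((τ ^ t) x₀)
    rw [pow_succ']
    rfl
  have P2 : y k = y 0 := by
    show (τ ^ k) x₀ = (τ ^ 0) x₀
    rw [hk, pow_orderOf_eq_one, pow_zero]
  have P3 : ∀ t, τ (y t) ≠ y t := by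
    intro t h
    apply hx₀
    have : τ ((τ ^ t) x₀) = (τ ^ t) (τ x₀) := by
      rw [← Equiv.Perm.mul_apply, ← Equiv.Perm.mul_apply, ← pow_succ', ← pow_succ]
    rw [this] at h
    exact (τ ^ t).injective h
  have Ppowfix : ∀ (d : ℕ), (τ ^ d) x₀ = x₀ → ∀ z, (τ ^ d) z = z := by
    intro d hd z
    by_cases hz : τ z = z
    · exact Equiv.Perm.pow_apply_eq_self_of_apply_eq_self hz d
    · obtain ⟨i, -, hi⟩ := (hall hz).exists_pow_eq'
      rw [← hi, ← Equiv.Perm.mul_apply, pow_mul_comm, Equiv.Perm.mul_apply, hd]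
  have P4 : ∀ s t, s < k → t < k → y s = y t → s = t := by
    have key : ∀ s t, s < t → t < k → y s = y t → False := by
      intro s t hst htk heq
      have h1 : (τ ^ (s + (t - s))) x₀ = (τ ^ s) x₀ := by
        rw [show s + (t - s) = t by omega]
        exact heq.symm
      rw [pow_add, Equiv.Perm.mul_apply] at h1
      have h2 : (τ ^ (t - s)) x₀ = x₀ := (τ ^ s).injective h1
      have h3 : τ ^ (t - s) = 1 := Equiv.ext (Ppowfix _ h2)
      have h4 : k ∣ (t - s) := orderOf_dvd_of_pow_eq_one h3
      have h5 : k ≤ t - s := Nat.le_of_dvd (by omega) h4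
      omega
    intro s t hsk htk heq
    rcases lt_trichotomy s t with h | h | h
    · exact absurd heq (fun he => key s t h htk he)
    · exact h
    · exact absurd heq.symm (fun he => key t s h hsk he)
  have P5 : ∀ z, τ z ≠ z → ∃ t, t < k ∧ y t = z := by
    intro z hz
    obtain ⟨i, hik, hi⟩ := (hall hz).exists_pow_eq'
    exact ⟨i, hik, hi⟩
  -- real values
  have hvfinB : ∀ r, nuv (A r (c (τ r))) ≠ ⊥ := by
    have hτfin : pw B τ ≠ ⊥ := by
      intro h
      rw [h, le_bot_iff] at hge
      exact hfin1 hge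
    intro r
    exact wsum_term_ne_bot Finset.univ (fun i => nuv (B i (τ i))) hτfin r (Finset.mem_univ r)
  set dR : Fin m → ℝ := fun r => WithBot.unbotD 0 (nuv (A r (c r))) with hdRdef
  have hdR : ∀ r, nuv (A r (c r)) = ((dR r : ℝ) : WithBot ℝ) := by
    intro r
    obtain ⟨a, ha⟩ := WithBot.ne_bot_iff_exists.1 (nuv_ne_bot_of_isR (hcR r))
    rw [← ha]
    simp [hdRdef, ← ha]
  set vv : Fin m → ℝ := fun r => WithBot.unbotD 0 (nuv (A r (c (τ r)))) with hvvdef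
  have hvv : ∀ r, nuv (A r (c (τ r))) = ((vv r : ℝ) : WithBot ℝ) := by
    intro r
    obtain ⟨a, ha⟩ := WithBot.ne_bot_iff_exists.1 (hvfinB r)
    rw [← ha]
    simp [hvvdef, ← ha]
  -- the real inequality over univ
  have huniv : ∑ r, dR r ≤ ∑ r, vv r := by
    have h1 : pw B 1 = (((∑ r, dR r : ℝ)) : WithBot ℝ) := by
      rw [pw, WithBot.coe_sum]
      exact Finset.sum_congr rfl fun r _ => by rw [Equiv.Perm.one_apply]; exact hdR r
    have h2 : pw B τ = (((∑ r, vv r : ℝ)) : WithBot ℝ) := by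
      rw [pw, WithBot.coe_sum]
      exact Finset.sum_congr rfl fun r _ => hvv r
    rw [h1, h2, WithBot.coe_le_coe] at hge
    exact hge
  -- restrict to support S
  have hoff : ∀ r, τ r = r → vv r = dR r := by
    intro r hr
    have : nuv (A r (c (τ r))) = nuv (A r (c r)) := by rw [hr]
    have := (hvv r).symm.trans (this.trans (hdR r))
    exact_mod_cast this
  set S : Finset (Fin m) := τ.support with hS
  have hkey : ∑ r ∈ S, dR r ≤ ∑ r ∈ S, vv r := by
    have hsplit1 := Finset.sum_add_sum_compl S dR
    have hsplit2 := Finset.sum_add_sum_compl S vv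
    have hcompl : ∑ r ∈ Sᶜ, vv r = ∑ r ∈ Sᶜ, dR r := by
      refine Finset.sum_congr rfl fun r hr => ?_
      rw [Finset.mem_compl, hS, Equiv.Perm.mem_support, not_not] at hr
      exact hoff r hr
    have := huniv
    rw [← hsplit1, ← hsplit2, hcompl] at this
    linarith
  -- reindex over range k
  have hSim : S = (Finset.range k).image y := by
    ext z
    simp only [Finset.mem_image, Finset.mem_range, hS, Equiv.Perm.mem_support]
    constructor
    · intro hz; exact P5 z hz
    · rintro ⟨t, htk, rfl⟩; exact P3 t
  have hinj : ∀ s ∈ Finset.range k, ∀ t ∈ Finset.range k, y s = y t → s = t := by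
    intro s hs t ht
    exact P4 s t (Finset.mem_range.1 hs) (Finset.mem_range.1 ht)
  have hDV : ∑ t ∈ Finset.range k, dR (y t) ≤ ∑ t ∈ Finset.range k, vv (y t) := by
    rw [← Finset.sum_image hinj, ← Finset.sum_image hinj, ← hSim]
    exact hkey
  -- coefficients
  set q : ℕ → ℝ := fun t => (∑ s ∈ Finset.range t, vv (y s)) - ∑ s ∈ Finset.range t, dR (y (s + 1))
    with hq
  set β : Fin m → WithBot ℝ :=
    fun r => if h : ∃ t, t < k ∧ y t = r then ((q (Nat.find h) : ℝ) : WithBot ℝ) else ⊥ with hβ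
  have hβy : ∀ t, t < k → β (y t) = ((q t : ℝ) : WithBot ℝ) := by
    intro t htk
    have hex : ∃ t', t' < k ∧ y t' = y t := ⟨t, htk, rfl⟩
    rw [hβ]
    simp only [dif_pos hex]
    have hspec := Nat.find_spec hex
    have : Nat.find hex = t := P4 _ _ hspec.1 htk hspec.2
    rw [this]
  refine ⟨β, ⟨y 0, ?_⟩, ?_⟩
  · rw [hβy 0 hk0]
    exact WithBot.coe_ne_bot
  intro j hviol
  obtain ⟨i₀, hnb, hre, hdom⟩ := hviol
  have hex : ∃ t, t < k ∧ y t = i₀ := by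
    by_contra h
    rw [hβ] at hnb
    simp only [dif_neg h] at hnb
    exact hnb rfl
  obtain ⟨s, hsk, hys⟩ := hex
  have hj : j = c i₀ := hcol i₀ j hre
  -- pick the coverer index
  set t : ℕ := if s = 0 then k - 1 else s - 1 with ht
  have htk : t < k := by rw [ht]; split_ifs <;> omega
  have hsucc : y (t + 1) = y s := by
    rw [ht]
    split_ifs with h0
    · rw [show k - 1 + 1 = k by omega, P2, h0]
    · rw [show s - 1 + 1 = s by omega]
  have htns : t ≠ s := by rw [ht]; split_ifs <;> omega
  have hyne : y t ≠ y s := fun h => htns (P4 t s htk hsk h)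
  -- the key inequality  q t + vv (y t) ≥ q s + dR (y s)
  have hqrec : ∀ u, q (u + 1) = q u + vv (y u) - dR (y (u + 1)) := by
    intro u
    rw [hq]
    simp only [Finset.sum_range_succ]
    ring
  have hkeyq : q s + dR (y s) ≤ q t + vv (y t) := by
    rw [ht]
    split_ifs with h0
    · -- s = 0, t = k-1 : reduces to hDV
      subst h0
      have hqk : q (k - 1) + vv (y (k - 1)) =
          ∑ u ∈ Finset.range k, vv (y u) - ∑ u ∈ Finset.range (k - 1), dR (y (u + 1)) := by
        rw [hq]
        simp only
        rw [show k = (k - 1) + 1 by omega, Finset.sum_range_succ]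
        rw [show (k-1) + 1 - 1 = k - 1 by omega]
        ring
      have hDsplit : ∑ u ∈ Finset.range k, dR (y u) =
          (∑ u ∈ Finset.range (k - 1), dR (y (u + 1))) + dR (y 0) := by
        rw [show k = (k - 1) + 1 by omega, Finset.sum_range_succ']
        rw [show (k-1) + 1 - 1 = k - 1 by omega]
      have hq0 : q 0 = 0 := by rw [hq]; simp
      rw [hqk, hq0]
      have := hDV
      rw [hDsplit] at this
      linarith
    · -- s ≥ 1, t = s - 1 : equality from recurrence
      have hrec := hqrec (s - 1)
      rw [show s - 1 + 1 = s by omega] at hrec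
      linarith [hrec]
  -- contradiction with hdom
  have hterm1 : β (y t) + nuv (A (y t) j) = ((q t + vv (y t) : ℝ) : WithBot ℝ) := by
    rw [hβy t htk]
    rw [hj]
    rw [← hys]
    rw [← hsucc]
    rw [P1]
    rw [hvv (y t), ← WithBot.coe_add]
  have hterm2 : β (y s) + nuv (A (y s) j) = ((q s + dR (y s) : ℝ) : WithBot ℝ) := by
    rw [hβy s hsk, hj, ← hys]
    rw [hdR (y s), ← WithBot.coe_add]
  have := hdom (y t) (fun h => hyne (h.trans hys.symm))
  rw [← hys] at this
  rw [hterm1, hterm2, WithBot.coe_lt_coe] at this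
  linarith

end
end Dev

namespace Dev
noncomputable section
open T Finset

variable {m n : ℕ}

open Classical in
def Rcount (A : Matrix (Fin m) (Fin n) T) : ℕ :=
  (Finset.univ.filter fun p : Fin m × Fin n => isR (A p.1 p.2)).card

lemma rcount_gfy {A : Matrix (Fin m) (Fin n) T} {r : Fin m} {c : Fin n} (h : isR (A r c)) :
    Rcount (gfy A r c) < Rcount A := by
  classical
  unfold Rcount
  apply Finset.card_lt_card
  constructor
  · intro p hp
    simp only [Finset.mem_filter, Finset.mem_univ, true_and] at hp ⊢
    exact isR_gfy hp
  · intro hsub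
    have h1 : ((r, c) : Fin m × Fin n) ∈
        Finset.univ.filter (fun p : Fin m × Fin n => isR (A p.1 p.2)) := by
      simp [h]
    have h2 := hsub h1
    simp only [Finset.mem_filter, Finset.mem_univ, true_and] at h2
    have : gfy A r c r c = nu (A r c) := by rw [gfy, if_pos ⟨rfl, rfl⟩]
    rw [this] at h2
    exact isR_nu _ h2

lemma key (hmn : m ≤ n) :
    ∀ (N : ℕ) (A : Matrix (Fin m) (Fin n) T), Rcount A ≤ N → GH A → ∃ β, Sol A β := by
  intro N
  induction N using Nat.strong_induction_on with
  | _ N IH =>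
  intro A hN hG
  -- Case 1 : a row with no real entries
  by_cases h1 : ∃ i₀, ∀ j, ¬ isR (A i₀ j)
  · obtain ⟨i₀, hrow⟩ := h1
    refine ⟨fun i => if i = i₀ then ((0 : ℝ) : WithBot ℝ) else ⊥, ⟨i₀, by simp⟩, ?_⟩
    rintro j ⟨i, hnb, hre, -⟩
    by_cases hii : i = i₀
    · exact hrow j (hii ▸ hre)
    · simp [hii] at hnb
  push_neg at h1
  -- Case 3 : a column with two real entries
  by_cases h2 : ∃ (c0 : Fin n) (r1 r2 : Fin m), r1 ≠ r2 ∧ isR (A r1 c0) ∧ isR (A r2 c0)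
  · obtain ⟨c0, r1, r2, hne, hR1, hR2⟩ := h2
    obtain ⟨β1, hsol1⟩ := IH (Rcount (gfy A r1 c0)) (lt_of_lt_of_le (rcount_gfy hR1) hN)
      (gfy A r1 c0) le_rfl (GH_gfy hmn hG)
    rcases sol_gfy_cases hsol1 with hS | hP1
    · exact ⟨β1, hS⟩
    obtain ⟨β2, hsol2⟩ := IH (Rcount (gfy A r2 c0)) (lt_of_lt_of_le (rcount_gfy hR2) hN)
      (gfy A r2 c0) le_rfl (GH_gfy hmn hG)
    rcases sol_gfy_cases hsol2 with hS | hP2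
    · exact ⟨β2, hS⟩
    -- mix the two pinned witnesses
    obtain ⟨m1, hm1⟩ := WithBot.ne_bot_iff_exists.1
      (show β1 r1 + nuv (A r1 c0) ≠ ⊥ from by
        obtain ⟨b, hb⟩ := WithBot.ne_bot_iff_exists.1 hP1.1
        obtain ⟨a, ha⟩ := WithBot.ne_bot_iff_exists.1 (nuv_ne_bot_of_isR hP1.2.1)
        rw [← hb, ← ha, ← WithBot.coe_add]; exact WithBot.coe_ne_bot)
    obtain ⟨m2, hm2⟩ := WithBot.ne_bot_iff_exists.1
      (show β2 r2 + nuv (A r2 c0) ≠ ⊥ from by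
        obtain ⟨b, hb⟩ := WithBot.ne_bot_iff_exists.1 hP2.1
        obtain ⟨a, ha⟩ := WithBot.ne_bot_iff_exists.1 (nuv_ne_bot_of_isR hP2.2.1)
        rw [← hb, ← ha, ← WithBot.coe_add]; exact WithBot.coe_ne_bot)
    set lam : ℝ := m2 - m1 with hlam
    set γ : Fin m → WithBot ℝ := fun i => max ((lam : WithBot ℝ) + β1 i) (β2 i) with hγ
    have hγle1 : ∀ i, (lam : WithBot ℝ) + β1 i ≤ γ i := fun i => le_max_left _ _
    have hγle2 : ∀ i, β2 i ≤ γ i := fun i => le_max_right _ _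
    have hγr1 : γ r1 ≠ ⊥ := by
      have hne1 : (lam : WithBot ℝ) + β1 r1 ≠ ⊥ := by
        obtain ⟨b, hb⟩ := WithBot.ne_bot_iff_exists.1 hP1.1
        rw [← hb, ← WithBot.coe_add]
        exact WithBot.coe_ne_bot
      intro hbot
      have hle := hγle1 r1
      rw [hbot, le_bot_iff] at hle
      exact hne1 hle
    refine ⟨γ, ⟨r1, hγr1⟩, ?_⟩
    intro j hviol
    obtain ⟨i₀, hvat⟩ := hviol
    have hTr1 : ((m2 : ℝ) : WithBot ℝ) ≤ γ r1 + nuv (A r1 c0) := by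
      calc ((m2 : ℝ) : WithBot ℝ) = (lam : WithBot ℝ) + m1 := by
            rw [← WithBot.coe_add, WithBot.coe_inj, hlam]; ring
        _ = (lam : WithBot ℝ) + (β1 r1 + nuv (A r1 c0)) := by rw [hm1]
        _ = ((lam : WithBot ℝ) + β1 r1) + nuv (A r1 c0) := by rw [add_assoc]
        _ ≤ γ r1 + nuv (A r1 c0) := add_le_add_left (hγle1 r1) _
    have hTr2 : ((m2 : ℝ) : WithBot ℝ) ≤ γ r2 + nuv (A r2 c0) := by
      calc ((m2 : ℝ) : WithBot ℝ) = β2 r2 + nuv (A r2 c0) := hm2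
        _ ≤ γ r2 + nuv (A r2 c0) := add_le_add_left (hγle2 r2) _
    rcases vat_mix hvat with ⟨hv1, hbr⟩ | ⟨hv2, hbr⟩
    · by_cases hj : j = c0
      · have hi₀ : i₀ = r1 := vat_unique hv1 (hj ▸ hP1)
        rw [hi₀] at hvat hbr
        rw [hj] at hvat
        have hdom2 := hvat.2.2 r2 (fun h => hne h.symm)
        have hTi₀ : γ r1 + nuv (A r1 c0) = ((m2 : ℝ) : WithBot ℝ) := by
          have : γ r1 = (lam : WithBot ℝ) + β1 r1 := hbr
          rw [this, add_assoc, ← hm1, ← WithBot.coe_add, WithBot.coe_inj, hlam]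
          ring
        rw [hTi₀] at hdom2
        exact absurd hTr2 (not_le.2 hdom2)
      · exact absurd ⟨i₀, vat_gfy hv1 (fun hc => hj hc.2)⟩ (hsol1.2 j)
    · by_cases hj : j = c0
      · have hi₀ : i₀ = r2 := vat_unique hv2 (hj ▸ hP2)
        rw [hi₀] at hvat hbr
        rw [hj] at hvat
        have hdom1 := hvat.2.2 r1 hne
        have hTi₀ : γ r2 + nuv (A r2 c0) = ((m2 : ℝ) : WithBot ℝ) := by
          have : γ r2 = β2 r2 := hbr
          rw [this, ← hm2]  -- γ r2 + ν = ↑m2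
        rw [hTi₀] at hdom1
        exact absurd hTr1 (not_le.2 hdom1)
      · exact absurd ⟨i₀, vat_gfy hv2 (fun hc => hj hc.2)⟩ (hsol2.2 j)
  push_neg at h2
  -- Case 4 : a row with two real entries
  by_cases h3 : ∃ (r : Fin m) (c1 c2 : Fin n), c1 ≠ c2 ∧ isR (A r c1) ∧ isR (A r c2)
  · obtain ⟨r, c1, c2, hnec, hR1, hR2⟩ := h3
    obtain ⟨β1, hsol1⟩ := IH (Rcount (gfy A r c1)) (lt_of_lt_of_le (rcount_gfy hR1) hN)
      (gfy A r c1) le_rfl (GH_gfy hmn hG)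
    rcases sol_gfy_cases hsol1 with hS | hP1
    · exact ⟨β1, hS⟩
    obtain ⟨β2, hsol2⟩ := IH (Rcount (gfy A r c2)) (lt_of_lt_of_le (rcount_gfy hR2) hN)
      (gfy A r c2) le_rfl (GH_gfy hmn hG)
    rcases sol_gfy_cases hsol2 with hS | hP2
    · exact ⟨β2, hS⟩
    -- hP1 : VAt A β1 c1 r,  hP2 : VAt A β2 c2 r
    obtain ⟨b1, hb1⟩ := WithBot.ne_bot_iff_exists.1 hP1.1
    obtain ⟨b2, hb2⟩ := WithBot.ne_bot_iff_exists.1 hP2.1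
    obtain ⟨a1, ha1⟩ := WithBot.ne_bot_iff_exists.1 (nuv_ne_bot_of_isR hR1)
    obtain ⟨a2, ha2⟩ := WithBot.ne_bot_iff_exists.1 (nuv_ne_bot_of_isR hR2)
    obtain ⟨i₁, -, hmax⟩ := Finset.exists_max_image (Finset.univ : Finset (Fin m))
      (fun i => β2 i + nuv (A i c1)) ⟨r, Finset.mem_univ r⟩
    have hMne : β2 i₁ + nuv (A i₁ c1) ≠ ⊥ := by
      intro hb
      have := hmax r (Finset.mem_univ r)
      rw [hb, le_bot_iff, ← hb2, ← ha1, ← WithBot.coe_add] at this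
      exact WithBot.coe_ne_bot this
    obtain ⟨mM, hmM⟩ := WithBot.ne_bot_iff_exists.1 hMne
    have hmMge : b2 + a1 ≤ mM := by
      have := hmax r (Finset.mem_univ r)
      rw [← hb2, ← ha1, ← WithBot.coe_add, ← hmM, WithBot.coe_le_coe] at this
      exact this
    set lam : ℝ := mM - (b1 + a1) with hlam
    set γ : Fin m → WithBot ℝ := fun i => max ((lam : WithBot ℝ) + β1 i) (β2 i) with hγ
    have hγle1 : ∀ i, (lam : WithBot ℝ) + β1 i ≤ γ i := fun i => le_max_left _ _
    have hγle2 : ∀ i, β2 i ≤ γ i := fun i => le_max_right _ _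
    have hγr : γ r ≠ ⊥ := by
      have hne1 : (lam : WithBot ℝ) + β1 r ≠ ⊥ := by
        rw [← hb1, ← WithBot.coe_add]
        exact WithBot.coe_ne_bot
      intro hbot
      have hle := hγle1 r
      rw [hbot, le_bot_iff] at hle
      exact hne1 hle
    refine ⟨γ, ⟨r, hγr⟩, ?_⟩
    intro j hviol
    obtain ⟨i₀, hvat⟩ := hviol
    rcases vat_mix hvat with ⟨hv1, hbr⟩ | ⟨hv2, hbr⟩
    · by_cases hj : j = c1
      · have hi₀ : i₀ = r := vat_unique hv1 (hj ▸ hP1)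
        rw [hi₀] at hvat hbr
        rw [hj] at hvat
        have hTr : γ r + nuv (A r c1) = ((mM : ℝ) : WithBot ℝ) := by
          have : γ r = (lam : WithBot ℝ) + β1 r := hbr
          rw [this, add_assoc, ← hb1, ← ha1, ← WithBot.coe_add, ← WithBot.coe_add,
            WithBot.coe_inj, hlam]
          ring
        by_cases hi₁ : i₁ = r
        · -- β2 violates column c1 in (gfy A r c2)
          apply hsol2.2 c1
          refine ⟨r, hP2.1, ?_, ?_⟩
          · rw [gfy_eq_of_ne (fun hc => hnec hc.2)]
            exact hR1
          · intro i' hi'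
            rw [nuv_gfy, nuv_gfy]
            have hle := hmax i' (Finset.mem_univ i')
            rcases lt_or_eq_of_le hle with hlt | heq
            · rw [← hi₁]; exact hlt
            · exfalso
              have hTi' : ((mM : ℝ) : WithBot ℝ) ≤ γ i' + nuv (A i' c1) := by
                rw [hmM, ← heq]
                exact add_le_add_left (hγle2 i') _
              have hd := hvat.2.2 i' hi'
              rw [hTr] at hd
              exact absurd hTi' (not_le.2 hd)
        · exfalso
          have hTi₁ : ((mM : ℝ) : WithBot ℝ) ≤ γ i₁ + nuv (A i₁ c1) := by
            rw [hmM]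
            exact add_le_add_left (hγle2 i₁) _
          have hd := hvat.2.2 i₁ hi₁
          rw [hTr] at hd
          exact absurd hTi₁ (not_le.2 hd)
      · exact absurd ⟨i₀, vat_gfy hv1 (fun hc => hj hc.2)⟩ (hsol1.2 j)
    · by_cases hj : j = c2
      · have hi₀ : i₀ = r := vat_unique hv2 (hj ▸ hP2)
        rw [hi₀] at hvat hbr
        rw [hj] at hvat
        -- derive a β1-violation at c2, contradicting hsol1
        apply hsol1.2 c2
        refine ⟨r, hP1.1, ?_, ?_⟩
        · rw [gfy_eq_of_ne (fun hc => hnec hc.2.symm)]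
          exact hR2
        · intro i' hi'
          rw [nuv_gfy, nuv_gfy]
          have h1' : (lam : WithBot ℝ) + (β1 i' + nuv (A i' c2)) < γ r + nuv (A r c2) := by
            have hle : (lam : WithBot ℝ) + β1 i' + nuv (A i' c2) ≤ γ i' + nuv (A i' c2) :=
              add_le_add_left (hγle1 i') _
            have hd := hvat.2.2 i' hi'
            rw [← add_assoc]
            exact lt_of_le_of_lt hle hd
          have h2' : γ r + nuv (A r c2) ≤ (lam : WithBot ℝ) + (β1 r + nuv (A r c2)) := by
            have : γ r = β2 r := hbr
            rw [this, ← hb2, ← hb1, ← ha2, ← WithBot.coe_add, ← WithBot.coe_add,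
              ← WithBot.coe_add, WithBot.coe_le_coe]
            have : b2 ≤ lam + b1 := by rw [hlam]; linarith
            linarith
          have := lt_of_lt_of_le h1' h2'
          exact (WithBot.add_lt_add_iff_left (by simp : (lam : WithBot ℝ) ≠ ⊥)).1 this
      · exact absurd ⟨i₀, vat_gfy hv2 (fun hc => hj hc.2)⟩ (hsol2.2 j)
  push_neg at h3
  -- Case 5 : permutation pattern
  · have hcex : ∀ i, ∃ j, isR (A i j) := h1
    set c : Fin m → Fin n := fun i => (hcex i).choose with hc
    have hcR : ∀ i, isR (A i (c i)) := fun i => (hcex i).choose_spec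
    have hcol : ∀ i j, isR (A i j) → j = c i := by
      intro i j hij
      by_contra hne
      exact h3 i j (c i) hne hij (hcR i)
    have hcinj : Function.Injective c := by
      intro i1 i2 heq
      by_contra hne
      exact h2 (c i1) i1 i2 hne (hcR i1) (heq ▸ hcR i2)
    exact perm_case A c hcR hcol hcinj hG

end
end Dev

/-- an `m × n` matrix (`m ≤ n`) with tropically independent rows
has a tropically nonsingular `m × m` submatrix. -/
theorem stmt17 {m n : ℕ} (hmn : m ≤ n) (A : Matrix (Fin m) (Fin n) T)
    (hind : ¬ T.Dependent (fun i j => A i j)) :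
    ∃ f : Fin m → Fin n, Function.Injective f ∧
      ¬ T.IsGhost (T.det (A.submatrix id f)) := by
  by_contra hcon
  push_neg at hcon
  apply hind
  have hG : Dev.GH A := fun f hf => (T.isGhost_iff_not_isR _).1 (hcon f hf)
  obtain ⟨β, hsol⟩ := Dev.key hmn (Dev.Rcount A) A le_rfl hG
  exact Dev.sol_dependent A β hsol
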